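/- (Laurent functional calculus for Υ and the Christoffel-perturbed moment matrix.) (i) For every r ≥ 1, every Laurent polynomial P(z) = ∑_{i=−d}^{d} P_i z^i with complex coefficients, every z ∈ ℂ∖{0} and all n ∈ ℕ, a ∈ {0,…,r−1}: ∑_{m∈ℕ} P(Υ_{[r]})(n,m)·Z_{[r]}(z)(m,a) = P(z)·Z_{[r]}(z)(n,a), where P(Υ_{[r]}) := ∑_{i=−d}^{d} P_i·Υ_{[r]}^{i} with Υ_{[r]}^{−i} := (Υ_{[r]}ᵀ)^{i}. (ii) For q,p ≥ 1, Laurent polynomials W_b(z) = ∑_{i=−d}^{d} ω_{b,i} z^i (b ∈ {0,…,q−1}) and any moment sequence c, the Christoffel-perturbed moment matrix factorizes as M_ĉ = 𝒲·M_c, entrywise with finite sums. -/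

import Mathlib

noncomputable section

/-- CMV exponent sequence 0, -1, 1, -2, 2, … : e(2k)=k, e(2k+1)=-(k+1). -/
def cmvE (n : ℕ) : ℤ := if n % 2 = 0 then ((n / 2 : ℕ) : ℤ) else -(((n / 2 : ℕ) : ℤ) + 1)

/-- The semi-infinite 0–1 matrix Υ_{[r]}. -/
def Ups (r : ℕ) : ℕ → ℕ → ℂ := fun n m =>
  if n % r = m % r ∧ cmvE (m / r) = cmvE (n / r) + 1 then 1 else 0

/-- The intertwining matrix η_{[r]}. -/
def Eta (r : ℕ) : ℕ → ℕ → ℂ := fun n m =>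
  if n % r = m % r ∧ cmvE (m / r) = -cmvE (n / r) then 1 else 0

/-- The untangling matrix ν_{[r]}. -/
def Nu (r : ℕ) : ℕ → ℕ → ℂ := fun n m =>
  if n % r = m % r ∧ cmvE (m / r) = -cmvE (n / r) - 1 then 1 else 0

/-- Entrywise product of semi-infinite matrices (entrywise finite sums in all uses below). -/
def mprod (A B : ℕ → ℕ → ℂ) : ℕ → ℕ → ℂ := fun n m => ∑' k, A n k * B k m

/-- The semi-infinite identity matrix. -/
def mid : ℕ → ℕ → ℂ := fun n m => if n = m then 1 else 0

/-- Transpose of a semi-infinite matrix. -/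
def mtrans (A : ℕ → ℕ → ℂ) : ℕ → ℕ → ℂ := fun n m => A m n

/-- Powers of a semi-infinite matrix. -/
def mpow (A : ℕ → ℕ → ℂ) : ℕ → ℕ → ℕ → ℂ
  | 0 => mid
  | d + 1 => mprod A (mpow A d)

/-- The CMV monomial matrix Z_{[r]}(z). -/
def cmvZ (r : ℕ) (z : ℂ) : ℕ → ℕ → ℂ := fun n a =>
  if n % r = a then z ^ cmvE (n / r) else 0

def LowerTri (L : ℕ → ℕ → ℂ) : Prop := ∀ n m, n < m → L n m = 0

def UpperTri (U : ℕ → ℕ → ℂ) : Prop := ∀ n m, m < n → U n m = 0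

/-- The left CMV moment matrix M_c. -/
def cmvM {q p : ℕ} (hq : 0 < q) (hp : 0 < p)
    (c : ℤ → Matrix (Fin q) (Fin p) ℂ) : ℕ → ℕ → ℂ := fun n m =>
  c (cmvE (n / q) - cmvE (m / p)) ⟨n % q, Nat.mod_lt _ hq⟩ ⟨m % p, Nat.mod_lt _ hp⟩

/-- The right CMV moment matrix 𝓜_c. -/
def cmvMR {q p : ℕ} (hq : 0 < q) (hp : 0 < p)
    (c : ℤ → Matrix (Fin q) (Fin p) ℂ) : ℕ → ℕ → ℂ := fun n m =>
  c (cmvE (m / p) - cmvE (n / q)) ⟨n % q, Nat.mod_lt _ hq⟩ ⟨m % p, Nat.mod_lt _ hp⟩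

/-- Integer powers of Υ_{[r]}, with Υ_{[r]}^{-i} := (Υ_{[r]}ᵀ)^{i}. -/
def UpsZ (r : ℕ) (i : ℤ) : ℕ → ℕ → ℂ :=
  if 0 ≤ i then mpow (Ups r) i.toNat else mpow (mtrans (Ups r)) (-i).toNat

/-- The matrix 𝒲 = ∑_{b=0}^{q-1} ∑_{i=-d}^{d} ω_{b,i}·Υ_{[q]}^{i}·I^{(b)}, where I^{(b)} is the
diagonal 0–1 matrix selecting the indices n ≡ b (mod q). -/
def Wcal (q d : ℕ) (ω : ℕ → ℤ → ℂ) : ℕ → ℕ → ℂ := fun n m =>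
  ∑ b ∈ Finset.range q, ∑ i ∈ Finset.Icc (-(d : ℤ)) (d : ℤ),
    ω b i * (UpsZ q i n m * (if m % q = b then 1 else 0))

/-- The Christoffel-perturbed moments ĉ(n)(b,a) := ∑_{i=-d}^{d} ω_{b,i}·c(n+i)(b,a). -/
def chat (q p d : ℕ) (ω : ℕ → ℤ → ℂ) (c : ℤ → Matrix (Fin q) (Fin p) ℂ) :
    ℤ → Matrix (Fin q) (Fin p) ℂ := fun n =>
  Matrix.of fun b a => ∑ i ∈ Finset.Icc (-(d : ℤ)) (d : ℤ), ω b.1 i * c (n + i) b a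

def eInv (j : ℤ) : ℕ := if 0 ≤ j then 2 * j.toNat else 2 * (-j).toNat - 1

lemma cmvE_eInv (j : ℤ) : cmvE (eInv j) = j := by
  unfold cmvE eInv; split_ifs <;> omega

lemma eInv_cmvE (n : ℕ) : eInv (cmvE n) = n := by
  unfold cmvE eInv; split_ifs <;> omega

lemma cmvE_inj {a b : ℕ} (h : cmvE a = cmvE b) : a = b := by
  have := eInv_cmvE a; rw [h, eInv_cmvE] at this; exact this.symm

def shiftF (r : ℕ) (j : ℤ) (n : ℕ) : ℕ := eInv (cmvE (n / r) + j) * r + n % r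

lemma shiftF_mod (r : ℕ) (j : ℤ) (n : ℕ) : shiftF r j n % r = n % r := by
  rw [shiftF, mul_comm, Nat.mul_add_mod, Nat.mod_mod_of_dvd n dvd_rfl]

lemma shiftF_div (r : ℕ) (hr : 0 < r) (j : ℤ) (n : ℕ) :
    shiftF r j n / r = eInv (cmvE (n / r) + j) := by
  unfold shiftF
  rw [mul_comm, Nat.mul_add_div hr, Nat.div_eq_of_lt (Nat.mod_lt _ hr), add_zero]

lemma cmvE_shiftF_div (r : ℕ) (hr : 0 < r) (j : ℤ) (n : ℕ) :
    cmvE (shiftF r j n / r) = cmvE (n / r) + j := by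
  rw [shiftF_div r hr, cmvE_eInv]

lemma shiftF_zero (r : ℕ) (n : ℕ) : shiftF r 0 n = n := by
  unfold shiftF
  rw [add_zero, eInv_cmvE, Nat.div_add_mod']

lemma shiftF_shiftF (r : ℕ) (hr : 0 < r) (i j : ℤ) (n : ℕ) :
    shiftF r j (shiftF r i n) = shiftF r (i + j) n := by
  show eInv (cmvE (shiftF r i n / r) + j) * r + (shiftF r i n) % r = _
  rw [cmvE_shiftF_div r hr, shiftF_mod, add_assoc]
  rfl

lemma mpow_ind (f : ℕ → ℕ) (k : ℕ) (n m : ℕ) :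
    mpow (fun n m => if m = f n then (1 : ℂ) else 0) k n m
      = if m = f^[k] n then 1 else 0 := by
  induction k generalizing n m with
  | zero => simp [mpow, mid, eq_comm]
  | succ k ih =>
    show mprod _ _ n m = _
    unfold mprod
    rw [tsum_eq_single (f n)]
    · beta_reduce
      rw [if_pos rfl, one_mul, ih, Function.iterate_succ_apply]
    · intro j hj
      simp [hj]

lemma ups_cond (r : ℕ) (hr : 0 < r) (n m : ℕ) :
    (n % r = m % r ∧ cmvE (m / r) = cmvE (n / r) + 1) ↔ m = shiftF r 1 n := by
  constructor
  · rintro ⟨h1, h2⟩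
    have h3 : eInv (cmvE (n / r) + 1) = m / r := by rw [← h2, eInv_cmvE]
    rw [shiftF, h3, h1]
    exact (Nat.div_add_mod' m r).symm
  · rintro rfl
    exact ⟨(shiftF_mod r 1 n).symm, cmvE_shiftF_div r hr 1 n⟩

lemma upsT_cond (r : ℕ) (hr : 0 < r) (n m : ℕ) :
    (m % r = n % r ∧ cmvE (n / r) = cmvE (m / r) + 1) ↔ m = shiftF r (-1) n := by
  constructor
  · rintro ⟨h1, h2⟩
    have h3 : eInv (cmvE (n / r) + (-1)) = m / r := by
      rw [show cmvE (n / r) + (-1) = cmvE (m / r) by omega, eInv_cmvE]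
    rw [shiftF, h3, ← h1]
    exact (Nat.div_add_mod' m r).symm
  · rintro rfl
    refine ⟨shiftF_mod r (-1) n, ?_⟩
    rw [cmvE_shiftF_div r hr (-1) n]; ring

lemma ups_eq (r : ℕ) (hr : 0 < r) :
    Ups r = fun n m => if m = shiftF r 1 n then (1 : ℂ) else 0 := by
  funext n m
  rw [Ups]
  congr 1
  exact propext (ups_cond r hr n m)

lemma upsT_eq (r : ℕ) (hr : 0 < r) :
    mtrans (Ups r) = fun n m => if m = shiftF r (-1) n then (1 : ℂ) else 0 := by
  funext n m
  rw [mtrans, Ups]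
  congr 1
  exact propext (upsT_cond r hr n m)

lemma iter_shiftF_one (r : ℕ) (hr : 0 < r) (k : ℕ) (n : ℕ) :
    (shiftF r 1)^[k] n = shiftF r (k : ℤ) n := by
  induction k generalizing n with
  | zero => simp [shiftF_zero]
  | succ k ih =>
    rw [Function.iterate_succ_apply', ih, shiftF_shiftF r hr]
    push_cast; ring_nf

lemma iter_shiftF_negone (r : ℕ) (hr : 0 < r) (k : ℕ) (n : ℕ) :
    (shiftF r (-1))^[k] n = shiftF r (-(k : ℤ)) n := by
  induction k generalizing n with
  | zero => simp [shiftF_zero]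
  | succ k ih =>
    rw [Function.iterate_succ_apply', ih, shiftF_shiftF r hr]
    push_cast; ring_nf

lemma upsZ_eq (r : ℕ) (hr : 0 < r) (i : ℤ) (n m : ℕ) :
    UpsZ r i n m = if m = shiftF r i n then 1 else 0 := by
  rcases le_or_gt 0 i with h | h
  · rw [UpsZ, if_pos h, ups_eq r hr, mpow_ind, iter_shiftF_one r hr,
      Int.toNat_of_nonneg h]
  · rw [UpsZ, if_neg (not_le.mpr h), upsT_eq r hr, mpow_ind, iter_shiftF_negone r hr,
      show -(((-i).toNat : ℤ)) = i by omega]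

lemma summable_single {f : ℕ → ℂ} (c : ℕ) (h : ∀ m, m ≠ c → f m = 0) : Summable f :=
  summable_of_ne_finset_zero (s := {c}) (fun b hb => h b (by simpa using hb))

lemma cmvZ_shiftF (r : ℕ) (hr : 0 < r) (z : ℂ) (hz : z ≠ 0) (i : ℤ) (n a : ℕ) :
    cmvZ r z (shiftF r i n) a = z ^ i * cmvZ r z n a := by
  unfold cmvZ
  rw [shiftF_mod, cmvE_shiftF_div r hr]
  split_ifs
  · rw [zpow_add₀ hz, mul_comm]
  · ring

/-- Laurent functional calculus for Υ and the Christoffel-perturbed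
moment matrix, M_ĉ = 𝒲·M_c. -/
theorem stmt_17 :
    (∀ r : ℕ, 1 ≤ r → ∀ d : ℕ, ∀ Pc : ℤ → ℂ, ∀ z : ℂ, z ≠ 0 → ∀ n a : ℕ, a < r →
      (∑' m, (∑ i ∈ Finset.Icc (-(d : ℤ)) (d : ℤ), Pc i * UpsZ r i n m) * cmvZ r z m a)
        = (∑ i ∈ Finset.Icc (-(d : ℤ)) (d : ℤ), Pc i * z ^ i) * cmvZ r z n a) ∧
    (∀ q p : ℕ, ∀ hq : 0 < q, ∀ hp : 0 < p, ∀ d : ℕ, 1 ≤ d → ∀ ω : ℕ → ℤ → ℂ,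
      ∀ c : ℤ → Matrix (Fin q) (Fin p) ℂ, ∀ n m : ℕ,
        cmvM hq hp (chat q p d ω c) n m = ∑' k, Wcal q d ω n k * cmvM hq hp c k m) := by
  constructor
  · intro r hr d Pc z hz n a ha
    have hr' : 0 < r := hr
    calc ∑' m, (∑ i ∈ Finset.Icc (-(d : ℤ)) (d : ℤ), Pc i * UpsZ r i n m) * cmvZ r z m a
        = ∑' m, ∑ i ∈ Finset.Icc (-(d : ℤ)) (d : ℤ), Pc i * UpsZ r i n m * cmvZ r z m a :=
          tsum_congr fun m => Finset.sum_mul _ _ _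
      _ = ∑ i ∈ Finset.Icc (-(d : ℤ)) (d : ℤ), ∑' m, Pc i * UpsZ r i n m * cmvZ r z m a := by
          refine Summable.tsum_finsetSum fun i _ => summable_single (shiftF r i n) fun m hm => ?_
          rw [upsZ_eq r hr', if_neg hm]; ring
      _ = ∑ i ∈ Finset.Icc (-(d : ℤ)) (d : ℤ), Pc i * cmvZ r z (shiftF r i n) a := by
          refine Finset.sum_congr rfl fun i _ => ?_
          rw [tsum_eq_single (shiftF r i n)
            (fun m hm => by rw [upsZ_eq r hr', if_neg hm]; ring)]
          rw [upsZ_eq r hr', if_pos rfl, mul_one]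
      _ = ∑ i ∈ Finset.Icc (-(d : ℤ)) (d : ℤ), Pc i * (z ^ i * cmvZ r z n a) :=
          Finset.sum_congr rfl fun i _ => by rw [cmvZ_shiftF r hr' z hz]
      _ = (∑ i ∈ Finset.Icc (-(d : ℤ)) (d : ℤ), Pc i * z ^ i) * cmvZ r z n a := by
          rw [Finset.sum_mul]
          exact Finset.sum_congr rfl fun i _ => (mul_assoc _ _ _).symm
  · intro q p hq hp d hd ω c n m
    have hsum : ∀ b i, Summable (fun k =>
        ω b i * (UpsZ q i n k * (if k % q = b then 1 else 0)) * cmvM hq hp c k m) :=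
      fun b i => summable_single (shiftF q i n) fun k hk => by
        rw [upsZ_eq q hq, if_neg hk]; ring
    have key : ∀ k, Wcal q d ω n k * cmvM hq hp c k m
        = ∑ b ∈ Finset.range q, ∑ i ∈ Finset.Icc (-(d : ℤ)) (d : ℤ),
            ω b i * (UpsZ q i n k * (if k % q = b then 1 else 0)) * cmvM hq hp c k m := by
      intro k
      rw [Wcal, Finset.sum_mul]
      exact Finset.sum_congr rfl fun b _ => Finset.sum_mul _ _ _
    rw [tsum_congr key, Summable.tsum_finsetSum (fun b _ => summable_sum fun i _ => hsum b i)]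
    have step2 : ∀ b ∈ Finset.range q,
        (∑' k, ∑ i ∈ Finset.Icc (-(d : ℤ)) (d : ℤ),
            ω b i * (UpsZ q i n k * (if k % q = b then 1 else 0)) * cmvM hq hp c k m)
        = ∑ i ∈ Finset.Icc (-(d : ℤ)) (d : ℤ),
            ω b i * (if n % q = b then 1 else 0) * cmvM hq hp c (shiftF q i n) m := by
      intro b _
      rw [Summable.tsum_finsetSum (fun i _ => hsum b i)]
      refine Finset.sum_congr rfl fun i _ => ?_
      rw [tsum_eq_single (shiftF q i n)
        (fun k hk => by rw [upsZ_eq q hq, if_neg hk]; ring)]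
      rw [upsZ_eq q hq, if_pos rfl, shiftF_mod, one_mul]
    rw [Finset.sum_congr rfl step2,
      Finset.sum_eq_single_of_mem (n % q) (Finset.mem_range.mpr (Nat.mod_lt _ hq))
        (fun b _ hb => Finset.sum_eq_zero fun i _ => by
          rw [if_neg (fun h => hb h.symm)]; ring)]
    simp only [cmvM, chat, Matrix.of_apply]
    refine Finset.sum_congr rfl fun i _ => ?_
    rw [show cmvE (n / q) - cmvE (m / p) + i = cmvE (n / q) + i - cmvE (m / p) from by ring]
    simp [cmvE_shiftF_div q hq, shiftF_mod]
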